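/- arXiv:1812.05579 — 2 statements merged into one kernel-verified Lean document; each statement's English description precedes it below -/
import Mathlib

section
/- Let ψ : GL⁺ → ℝ be continuously differentiable and non-degenerate, i.e. for every sequence (Fₙ) in GL⁺, if det Fₙ → 0 or ‖Fₙ‖ + ‖Fₙ⁻¹‖ → +∞ then ψ(Fₙ) → +∞. Define the Piola–Kirchhoff stress P(F) as the gradient of ψ at F with respect to the Frobenius inner product, and the Cauchy stress T(F) = (det F)⁻¹ P(F) Fᵀ. Then there exists G ∈ GL⁺ with T(G) = 0 (equivalently P(G) = 0); moreover G can be taken to be a global minimizer of ψ on GL⁺. -/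
open Matrix Filter Topology

/-- The Frobenius norm of a 3×3 real matrix. -/
noncomputable def frob (A : Matrix (Fin 3) (Fin 3) ℝ) : ℝ :=
  Real.sqrt (Matrix.trace (Aᵀ * A))

/-- GL⁺: the set of 3×3 real matrices with positive determinant. -/
def GLpos : Set (Matrix (Fin 3) (Fin 3) ℝ) := {F | 0 < F.det}

/-- The Cauchy stress associated to a Piola–Kirchhoff stress `P`:
`T(F) = (det F)⁻¹ P(F) Fᵀ`. -/
noncomputable def cauchy (P : Matrix (Fin 3) (Fin 3) ℝ → Matrix (Fin 3) (Fin 3) ℝ)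
    (F : Matrix (Fin 3) (Fin 3) ℝ) : Matrix (Fin 3) (Fin 3) ℝ :=
  (F.det)⁻¹ • (P F * Fᵀ)

lemma trace_transpose_mul_self (A : Matrix (Fin 3) (Fin 3) ℝ) :
    Matrix.trace (Aᵀ * A) = ∑ i, ∑ j, (A j i) ^ 2 := by
  simp [Matrix.trace, Matrix.mul_apply, Matrix.diag, sq]

lemma frob_nonneg (A : Matrix (Fin 3) (Fin 3) ℝ) : 0 ≤ frob A := Real.sqrt_nonneg _

lemma entry_abs_le_frob (A : Matrix (Fin 3) (Fin 3) ℝ) (i j : Fin 3) :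
    |A i j| ≤ frob A := by
  have h : (A i j) ^ 2 ≤ Matrix.trace (Aᵀ * A) := by
    rw [trace_transpose_mul_self]
    have h1 : (A i j) ^ 2 ≤ ∑ k, (A k j) ^ 2 :=
      Finset.single_le_sum (fun k _ => sq_nonneg (A k j)) (Finset.mem_univ i)
    refine h1.trans ?_
    exact Finset.single_le_sum
      (fun k _ => Finset.sum_nonneg fun l _ => sq_nonneg (A l k)) (Finset.mem_univ j)
  calc |A i j| = Real.sqrt ((A i j) ^ 2) := (Real.sqrt_sq_eq_abs _).symm
    _ ≤ frob A := Real.sqrt_le_sqrt h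

lemma frob_continuous : Continuous frob :=
  Real.continuous_sqrt.comp
    ((continuous_id.matrix_transpose.matrix_mul continuous_id).matrix_trace)

lemma matrix_eq_zero_of_trace (A : Matrix (Fin 3) (Fin 3) ℝ)
    (h : Matrix.trace (Aᵀ * A) = 0) : A = 0 := by
  rw [trace_transpose_mul_self] at h
  ext i j
  have h1 := (Finset.sum_eq_zero_iff_of_nonneg
    (fun k _ => Finset.sum_nonneg fun l _ => sq_nonneg (A l k))).mp h j (Finset.mem_univ j)
  have h2 := (Finset.sum_eq_zero_iff_of_nonneg
    (fun l _ => sq_nonneg (A l j))).mp h1 i (Finset.mem_univ i)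
  simpa using pow_eq_zero_iff (n := 2) (by norm_num) |>.mp h2

/-- Existence of a relaxed state (compressible case): a C¹, non-degenerate energy on GL⁺
has a global minimizer `G`, at which the Cauchy stress vanishes. -/
theorem existence_of_relaxed_state
    (ψ : Matrix (Fin 3) (Fin 3) ℝ → ℝ)
    (P : Matrix (Fin 3) (Fin 3) ℝ → Matrix (Fin 3) (Fin 3) ℝ)
    (hψcont : ContinuousOn ψ GLpos)
    (hPcont : ContinuousOn P GLpos)
    (hgrad : ∀ F ∈ GLpos, ∀ H : Matrix (Fin 3) (Fin 3) ℝ,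
      HasDerivAt (fun t : ℝ => ψ (F + t • H)) (Matrix.trace ((P F)ᵀ * H)) 0)
    (hnondeg : ∀ Fs : ℕ → Matrix (Fin 3) (Fin 3) ℝ,
      (∀ n, Fs n ∈ GLpos) →
      (Tendsto (fun n => (Fs n).det) atTop (𝓝 0) ∨
        Tendsto (fun n => frob (Fs n) + frob (Fs n)⁻¹) atTop atTop) →
      Tendsto (fun n => ψ (Fs n)) atTop atTop) :
    ∃ G ∈ GLpos, cauchy P G = 0 ∧ ∀ F ∈ GLpos, ψ G ≤ ψ F := by
  classical
  have hone : (1 : Matrix (Fin 3) (Fin 3) ℝ) ∈ GLpos := by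
    simp [GLpos]
  -- Step 1: sublevel set is contained in a "compact" region.
  have claim : ∃ m : ℕ, ∀ F ∈ GLpos, ψ F ≤ ψ 1 →
      (1 / (m + 1 : ℝ) ≤ F.det ∧ frob F ≤ m) := by
    by_contra hcon
    push_neg at hcon
    choose Fs hFs1 hFs2 hFs3 using hcon
    -- For each n, det Fs n < 1/(n+1)  or  frob Fs n > n
    have halt : ∀ n : ℕ, (Fs n).det < 1 / (n + 1 : ℝ) ∨ (n : ℝ) < frob (Fs n) := by
      intro n
      by_cases h : 1 / (n + 1 : ℝ) ≤ (Fs n).det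
      · exact Or.inr (hFs3 n h)
      · exact Or.inl (not_le.mp h)
    set p : ℕ → Prop := fun n => (Fs n).det < 1 / (n + 1 : ℝ) with hp
    have hsplit : {n | p n}.Infinite ∨ {n | ¬ p n}.Infinite := by
      by_contra h
      push_neg at h
      have := Set.Finite.union h.1 h.2
      have huniv : {n | p n} ∪ {n | ¬ p n} = Set.univ := by
        ext n; by_cases hn : p n <;> simp [hn]
      rw [huniv] at this
      exact Set.infinite_univ this
    have contra : ∀ (g : ℕ → ℕ), StrictMono g →
        Tendsto (fun n => ψ (Fs (g n))) atTop atTop → False := by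
      intro g _ hT
      obtain ⟨n, hn⟩ := (hT.eventually_gt_atTop (ψ 1)).exists
      exact absurd (hFs2 (g n)) (not_le.mpr hn)
    rcases hsplit with hinf | hinf
    · -- determinant subsequence tends to 0
      have hmem : ∀ n, p (Nat.nth p n) := fun n => Nat.nth_mem_of_infinite hinf n
      have hmono : StrictMono (Nat.nth p) := Nat.nth_strictMono hinf
      refine contra _ hmono (hnondeg _ (fun n => hFs1 _) (Or.inl ?_))
      refine squeeze_zero (f := fun n => (Fs (Nat.nth p n)).det)
        (g := fun n => 1 / (n + 1 : ℝ)) (fun n => le_of_lt (hFs1 (Nat.nth p n))) ?_ ?_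
      · intro n
        have h1 : (Fs (Nat.nth p n)).det < 1 / ((Nat.nth p n : ℝ) + 1) := hmem n
        have h2 : (1 : ℝ) / ((Nat.nth p n : ℝ) + 1) ≤ 1 / (n + 1 : ℝ) := by
          apply one_div_le_one_div_of_le
          · positivity
          · have h3 : (n : ℝ) ≤ (Nat.nth p n : ℝ) := Nat.cast_le.mpr hmono.le_apply
            linarith
        exact h1.le.trans h2
      · exact tendsto_one_div_add_atTop_nhds_zero_nat
    · -- frobenius norm subsequence tends to ∞
      set q : ℕ → Prop := fun n => ¬ p n with hq
      have hmem : ∀ n, q (Nat.nth q n) := fun n => Nat.nth_mem_of_infinite hinf n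
      have hmono : StrictMono (Nat.nth q) := Nat.nth_strictMono hinf
      refine contra _ hmono (hnondeg _ (fun n => hFs1 _) (Or.inr ?_))
      refine tendsto_atTop_mono ?_ tendsto_natCast_atTop_atTop
      · intro n
        have h1 : ((Nat.nth q n : ℕ) : ℝ) < frob (Fs (Nat.nth q n)) := by
          rcases halt (Nat.nth q n) with h | h
          · exact absurd h (hmem n)
          · exact h
        have h2 : (n : ℝ) ≤ (Nat.nth q n : ℝ) := Nat.cast_le.mpr (hmono.le_apply)
        have h3 := frob_nonneg (Fs (Nat.nth q n))⁻¹
        linarith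
  obtain ⟨m, hm⟩ := claim
  -- Step 2: compact set K
  set K : Set (Matrix (Fin 3) (Fin 3) ℝ) :=
    {F | 1 / (m + 1 : ℝ) ≤ F.det ∧ frob F ≤ m} with hK
  have hKsub : K ⊆ GLpos := by
    intro F hF
    have : (0:ℝ) < 1 / (m + 1 : ℝ) := by positivity
    exact lt_of_lt_of_le this hF.1
  have h1K : (1 : Matrix (Fin 3) (Fin 3) ℝ) ∈ K := hm 1 hone le_rfl
  have hKclosed : IsClosed K :=
    (isClosed_le continuous_const continuous_id.matrix_det).inter
      (isClosed_le frob_continuous continuous_const)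
  have hbox : IsCompact ((Set.univ : Set (Fin 3)).pi fun _ =>
      (Set.univ : Set (Fin 3)).pi fun _ => Set.Icc (-(m:ℝ)) m) :=
    isCompact_univ_pi fun _ => isCompact_univ_pi fun _ => isCompact_Icc
  have hKcomp : IsCompact K := by
    refine hbox.of_isClosed_subset hKclosed ?_
    intro F hF
    intro i _ j _
    have h1 : |F i j| ≤ (m : ℝ) := (entry_abs_le_frob F i j).trans hF.2
    exact abs_le.mp h1
  obtain ⟨G, hGK, hGmin⟩ := hKcomp.exists_isMinOn ⟨1, h1K⟩ (hψcont.mono hKsub)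
  have hG : G ∈ GLpos := hKsub hGK
  have hGle1 : ψ G ≤ ψ 1 := hGmin h1K
  have hglobal : ∀ F ∈ GLpos, ψ G ≤ ψ F := by
    intro F hF
    by_cases h : ψ F ≤ ψ 1
    · exact hGmin (hm F hF h)
    · exact hGle1.trans (not_le.mp h).le
  -- Step 3: stress vanishes
  have hopen : IsOpen GLpos := isOpen_lt continuous_const continuous_id.matrix_det
  have hPzero : P G = 0 := by
    have hkey : ∀ H : Matrix (Fin 3) (Fin 3) ℝ, Matrix.trace ((P G)ᵀ * H) = 0 := by
      intro H
      have hloc : IsLocalMin (fun t : ℝ => ψ (G + t • H)) 0 := by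
        have hc : Continuous fun t : ℝ => G + t • H := by continuity
        have hev : ∀ᶠ t in 𝓝 (0:ℝ), G + t • H ∈ GLpos := by
          apply hc.continuousAt.preimage_mem_nhds
          apply hopen.mem_nhds
          simpa using hG
        refine hev.mono fun t ht => ?_
        simpa using hglobal _ ht
      exact hloc.hasDerivAt_eq_zero (hgrad G hG H)
    exact matrix_eq_zero_of_trace (P G) (hkey (P G))
  refine ⟨G, hG, ?_, hglobal⟩
  simp [cauchy, hPzero]
end

section
/- Let h : M₃(ℝ) × M₃(ℝ) × (0,∞) → ℝ be convex and let G be a 3×3 real matrix with det G > 0. Define ψ_G on GL⁺ by ψ_G(F) = (det G)·h(F G⁻¹, cof(F G⁻¹), det(F G⁻¹)), where cof A = (det A)(A⁻¹)ᵀ. Then ψ_G is polyconvex: there exists a convex function h_G : M₃(ℝ) × M₃(ℝ) × (0,∞) → ℝ such that ψ_G(F) = h_G(F, cof F, det F) for all F ∈ GL⁺. (Explicitly, one may take h_G(F, C, δ) = (det G)·h(F G⁻¹, C·(cof G)⁻¹, δ/det G), using that cof(AB) = (cof A)(cof B).) -/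
open Matrix

/-- The cofactor matrix of a 3×3 real matrix: `cof A = (det A) (A⁻¹)ᵀ`. -/
noncomputable def cof (A : Matrix (Fin 3) (Fin 3) ℝ) : Matrix (Fin 3) (Fin 3) ℝ :=
  A.det • (A⁻¹)ᵀ

/-- Polyconvexity is inherited under a fixed elastic distortion `G`: if `h` is convex,
then the distorted energy `ψ_G(F) = (det G) h(F G⁻¹, cof(F G⁻¹), det(F G⁻¹))` is
polyconvex. -/
theorem polyconvexity_inherited_by_distortion
    (h : Matrix (Fin 3) (Fin 3) ℝ × Matrix (Fin 3) (Fin 3) ℝ × ℝ → ℝ)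
    (hconv : ConvexOn ℝ {p : Matrix (Fin 3) (Fin 3) ℝ × Matrix (Fin 3) (Fin 3) ℝ × ℝ |
      0 < p.2.2} h)
    (G : Matrix (Fin 3) (Fin 3) ℝ) (hG : 0 < G.det) :
    ∃ hG' : Matrix (Fin 3) (Fin 3) ℝ × Matrix (Fin 3) (Fin 3) ℝ × ℝ → ℝ,
      ConvexOn ℝ {p : Matrix (Fin 3) (Fin 3) ℝ × Matrix (Fin 3) (Fin 3) ℝ × ℝ |
        0 < p.2.2} hG' ∧
      ∀ F ∈ GLpos,
        G.det * h (F * G⁻¹, cof (F * G⁻¹), (F * G⁻¹).det) = hG' (F, cof F, F.det) := by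
  classical
  set S : Set (Matrix (Fin 3) (Fin 3) ℝ × Matrix (Fin 3) (Fin 3) ℝ × ℝ) :=
    {p | 0 < p.2.2} with hS
  set L : Matrix (Fin 3) (Fin 3) ℝ × Matrix (Fin 3) (Fin 3) ℝ × ℝ →
      Matrix (Fin 3) (Fin 3) ℝ × Matrix (Fin 3) (Fin 3) ℝ × ℝ :=
    fun p => (p.1 * G⁻¹, p.2.1 * cof (G⁻¹), p.2.2 / G.det) with hL
  refine ⟨fun p => G.det * h (L p), ⟨?_, ?_⟩, ?_⟩
  · -- convexity of the set S
    intro p hp q hq a b ha hb hab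
    simp only [hS, Set.mem_setOf_eq] at hp hq ⊢
    rcases ha.eq_or_lt with rfl | ha'
    · simpa using by
        have : b = 1 := by linarith
        simpa [this] using hq
    · have : 0 ≤ b * q.2.2 := mul_nonneg hb hq.le
      have : 0 < a * p.2.2 := mul_pos ha' hp
      simp only [Prod.smul_snd, Prod.add_def, Prod.snd_add, smul_eq_mul]
      nlinarith [mul_nonneg hb hq.le]
  · -- convexity inequality
    intro p hp q hq a b ha hb hab
    have hLmem : ∀ r ∈ S, L r ∈ S := by
      intro r hr
      simp only [hS, Set.mem_setOf_eq] at hr ⊢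
      exact div_pos hr hG
    have hlin : L (a • p + b • q) = a • L p + b • L q := by
      simp only [hL, Prod.smul_fst, Prod.smul_snd, Prod.fst_add, Prod.snd_add,
        Prod.mk_add_mk, Prod.smul_mk, smul_eq_mul]
      refine Prod.ext ?_ (Prod.ext ?_ ?_)
      · simp [Matrix.add_mul, Matrix.smul_mul]
      · simp [Matrix.add_mul, Matrix.smul_mul]
      · simp [div_eq_mul_inv]; ring
    have hineq := hconv.2 (hLmem p hp) (hLmem q hq) ha hb hab
    rw [← hlin] at hineq
    have := mul_le_mul_of_nonneg_left hineq hG.le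
    simp only [smul_eq_mul] at this ⊢
    calc G.det * h (L (a • p + b • q)) ≤ G.det * (a * h (L p) + b * h (L q)) := this
      _ = a * (G.det * h (L p)) + b * (G.det * h (L q)) := by ring
  · -- the identity on GL⁺
    intro F hF
    have hdet : (F * G⁻¹).det = F.det / G.det := by
      rw [Matrix.det_mul, Matrix.det_nonsing_inv, div_eq_mul_inv, Ring.inverse_eq_inv]
    have hcof : cof (F * G⁻¹) = cof F * cof (G⁻¹) := by
      simp only [cof, Matrix.det_mul, Matrix.mul_inv_rev, Matrix.transpose_mul,
        Matrix.smul_mul, Matrix.mul_smul, smul_smul]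
      rw [mul_comm]
    simp only [hL]
    rw [hdet, hcof]
end
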